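/- Let χ be a nontrivial additive character of F_q, d ≥ 1, j ∈ F_q^*, and m ∈ F_q^d with exactly k coordinates equal to zero, where 1 ≤ k ≤ d-1. Then Σ_{x ∈ H_j} χ(m·x) = (-1)^{d-k} (q-1)^{k-1}. Equivalently, with |H_j| = (q-1)^{d-1}, the inverse Fourier transform of the normalized surface measure satisfies (dσ_j)^∨(m) = (-1)^{d-k} (q-1)^{-(d-k)}. -/

import Mathlib

open Finset

private lemma addchar_map_sum {F : Type} [AddCommMonoid F] (χ : AddChar F ℂ)
    {ι : Type} (s : Finset ι) (f : ι → F) :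
    χ (∑ i ∈ s, f i) = ∏ i ∈ s, χ (f i) := by
  induction s using Finset.cons_induction with
  | empty => simp
  | cons a s ha ih => simp [Finset.sum_cons, Finset.prod_cons, AddChar.map_add_eq_mul, ih]

private lemma sum_compl_zero {F : Type} [Field F] [Fintype F] [DecidableEq F]
    (χ : AddChar F ℂ) (hχ : χ ≠ 1) (u : F) (hu : u ≠ 0) :
    ∑ t ∈ ({0}ᶜ : Finset F), χ (u * t) = -1 := by
  have h0 : ∑ t : F, χ (u * t) = 0 :=
    (Fintype.sum_bijective _ (mulLeft_bijective₀ u hu) _ χ (fun t => rfl)).trans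
      (AddChar.sum_eq_zero_of_ne_one hχ)
  have : ({0}ᶜ : Finset F) = Finset.univ.erase 0 := by
    ext t; simp
  rw [this, Finset.sum_erase_eq_sub (Finset.mem_univ 0), h0]
  simp

/-- Cardinality of the level set of the product map on `Fin (n+1) → F`. -/
private lemma card_level_fin {F : Type} [Field F] [Fintype F] [DecidableEq F]
    (n : ℕ) (c : F) (hc : c ≠ 0) :
    (Finset.univ.filter (fun a : Fin (n + 1) → F => ∏ i, a i = c)).card
      = (Fintype.card F - 1) ^ n := by
  have hcard : (Fintype.piFinset (fun _ : Fin n => ({0}ᶜ : Finset F))).card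
      = (Fintype.card F - 1) ^ n := by
    rw [Fintype.card_piFinset]
    simp [Finset.card_compl]
  rw [← hcard]
  refine Finset.card_nbij' (fun a => Fin.tail a)
    (fun b => Fin.cons (c / ∏ i, b i) b) ?_ ?_ ?_ ?_
  · intro a ha
    simp only [Finset.mem_coe, Finset.mem_filter, Finset.mem_univ, true_and] at ha
    simp only [Finset.mem_coe, Fintype.mem_piFinset, Finset.mem_compl, Finset.mem_singleton]
    intro i
    intro h
    apply hc
    rw [← ha]
    exact Finset.prod_eq_zero (Finset.mem_univ i.succ) h
  · intro b hb
    simp only [Finset.mem_coe, Fintype.mem_piFinset, Finset.mem_compl, Finset.mem_singleton] at hb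
    have hbne : (∏ i, b i) ≠ 0 := Finset.prod_ne_zero_iff.2 fun i _ => hb i
    simp only [Finset.mem_coe, Finset.mem_filter, Finset.mem_univ, true_and, Fin.prod_cons]
    field_simp
  · intro a ha
    simp only [Finset.mem_coe, Finset.mem_filter, Finset.mem_univ, true_and] at ha
    have h0 : a 0 ≠ 0 := by
      intro h
      apply hc
      rw [← ha]
      exact Finset.prod_eq_zero (Finset.mem_univ 0) h
    have htail : (∏ i, Fin.tail a i) ≠ 0 := by
      intro h
      obtain ⟨i, -, hi⟩ := Finset.prod_eq_zero_iff.1 h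
      apply hc
      rw [← ha]
      exact Finset.prod_eq_zero (Finset.mem_univ i.succ) hi
    have hprod : a 0 * ∏ i, Fin.tail a i = c := by
      rw [← ha, Fin.prod_univ_succ]; rfl
    have : c / ∏ i, Fin.tail a i = a 0 := by
      rw [div_eq_iff htail, ← hprod, mul_comm]
    show Fin.cons (c / ∏ i, Fin.tail a i) (Fin.tail a) = a
    rw [this, Fin.cons_self_tail]
  · intro b hb
    simp only []
    rw [Fin.tail_cons]

/-- Cardinality of the level set of the product map on `ι → F` for any nonempty fintype `ι`. -/
private lemma card_level {F : Type} [Field F] [Fintype F] [DecidableEq F]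
    {ι : Type} [Fintype ι] [DecidableEq ι] (hι : 1 ≤ Fintype.card ι)
    (c : F) (hc : c ≠ 0) :
    (Finset.univ.filter (fun a : ι → F => ∏ i, a i = c)).card
      = (Fintype.card F - 1) ^ (Fintype.card ι - 1) := by
  obtain ⟨n, hn⟩ : ∃ n, Fintype.card ι = n + 1 :=
    ⟨Fintype.card ι - 1, (Nat.succ_pred_eq_of_pos hι).symm⟩
  let e : ι ≃ Fin (n + 1) := Fintype.equivFinOfCardEq hn
  rw [hn]
  simp only [Nat.add_sub_cancel]
  rw [← card_level_fin n c hc]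
  refine Finset.card_nbij' (fun a => a ∘ e.symm) (fun b => b ∘ e) ?_ ?_ ?_ ?_
  · intro a ha
    simp only [Finset.mem_coe, Finset.mem_filter, Finset.mem_univ, true_and] at ha ⊢
    rw [← ha]
    exact Equiv.prod_comp e.symm a
  · intro b hb
    simp only [Finset.mem_coe, Finset.mem_filter, Finset.mem_univ, true_and] at hb ⊢
    rw [← hb]
    exact Equiv.prod_comp e b
  · intro a _; ext i; simp
  · intro b _; ext i; simp

private lemma sum_char_pi {F : Type} [Field F] [Fintype F] [DecidableEq F]
    (χ : AddChar F ℂ) (hχ : χ ≠ 1) {ι : Type} [Fintype ι] [DecidableEq ι]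
    (u : ι → F) (hu : ∀ i, u i ≠ 0) :
    ∑ b ∈ Fintype.piFinset (fun _ : ι => ({0}ᶜ : Finset F)), χ (∑ i, u i * b i)
      = (-1 : ℂ) ^ (Fintype.card ι) := by
  calc ∑ b ∈ Fintype.piFinset (fun _ : ι => ({0}ᶜ : Finset F)), χ (∑ i, u i * b i)
      = ∑ b ∈ Fintype.piFinset (fun _ : ι => ({0}ᶜ : Finset F)),
        ∏ i, χ (u i * b i) :=
        Finset.sum_congr rfl fun b _ => addchar_map_sum χ Finset.univ _
    _ = ∏ i, ∑ t ∈ ({0}ᶜ : Finset F), χ (u i * t) := Finset.sum_prod_piFinset ({0}ᶜ : Finset F) (fun i t => χ (u i * t))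
    _ = ∏ _i : ι, (-1 : ℂ) := Fintype.prod_congr _ _ fun i => sum_compl_zero χ hχ (u i) (hu i)
    _ = (-1 : ℂ) ^ (Fintype.card ι) := by rw [Finset.prod_const, Finset.card_univ]

set_option maxHeartbeats 1600000 in
theorem hamming_fourier_some_zeros (F : Type) [Field F] [Fintype F] [DecidableEq F]
    (χ : AddChar F ℂ) (hχ : χ ≠ 1) (d k : ℕ) (hk1 : 1 ≤ k) (hk2 : k ≤ d - 1)
    (j : F) (hj : j ≠ 0) (m : Fin d → F)
    (hm : (Finset.univ.filter (fun i : Fin d => m i = 0)).card = k) :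
    (∑ x ∈ Finset.univ.filter (fun x : Fin d → F => ∏ i, x i = j),
        χ (∑ i, m i * x i)
      = (-1 : ℂ) ^ (d - k) * ((Fintype.card F : ℂ) - 1) ^ (k - 1)) ∧
    (((Fintype.card F : ℂ) - 1) ^ (d - 1))⁻¹ *
        ∑ x ∈ Finset.univ.filter (fun x : Fin d → F => ∏ i, x i = j),
          χ (∑ i, m i * x i)
      = (-1 : ℂ) ^ (d - k) * (((Fintype.card F : ℂ) - 1) ^ (d - k))⁻¹ := by
  have hq2 : 2 ≤ Fintype.card F := Fintype.one_lt_card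
  have hq1 : ((Fintype.card F : ℂ) - 1) ≠ 0 := by
    rw [sub_ne_zero]
    exact_mod_cast Nat.ne_of_gt hq2
  set p : Fin d → Prop := fun i => m i = 0 with hp
  have hcardZ : Fintype.card {i : Fin d // p i} = k := by
    rw [Fintype.card_subtype]; exact hm
  have hcardN : Fintype.card {i : Fin d // ¬ p i} = d - k := by
    rw [Fintype.card_subtype_compl, hcardZ, Fintype.card_fin]
  have hdk : 1 ≤ d - k := by omega
  -- main computation
  set e := (Equiv.piEquivPiSubtypeProd p (fun _ => F)).symm with he
  have heval : ∀ (a : {i : Fin d // p i} → F) (b : {i : Fin d // ¬ p i} → F),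
      ∀ i : Fin d, e (a, b) i = if h : p i then a ⟨i, h⟩ else b ⟨i, h⟩ := by
    intro a b i
    simp [he, Equiv.piEquivPiSubtypeProd]
  have hprod : ∀ (a : {i : Fin d // p i} → F) (b : {i : Fin d // ¬ p i} → F),
      ∏ i, e (a, b) i = (∏ i, a i) * (∏ i, b i) := by
    intro a b
    rw [← Fintype.prod_subtype_mul_prod_subtype p (fun i => e (a, b) i)]
    congr 1
    · exact Fintype.prod_congr _ _ fun i => by rw [heval, dif_pos i.2]
    · exact Fintype.prod_congr _ _ fun i => by rw [heval, dif_neg i.2]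
  have hsum : ∀ (a : {i : Fin d // p i} → F) (b : {i : Fin d // ¬ p i} → F),
      ∑ i, m i * e (a, b) i = ∑ i : {i : Fin d // ¬ p i}, m i * b i := by
    intro a b
    rw [← Fintype.sum_subtype_add_sum_subtype p (fun i => m i * e (a, b) i)]
    have h1 : ∑ i : {i : Fin d // p i}, m i.1 * e (a, b) i.1 = 0 := by
      apply Finset.sum_eq_zero
      intro i _
      have : m i.1 = 0 := i.2
      rw [this, zero_mul]
    rw [h1, zero_add]
    exact Fintype.sum_congr _ _ fun i => by rw [heval, dif_neg i.2]
  have key : ∑ x ∈ Finset.univ.filter (fun x : Fin d → F => ∏ i, x i = j),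
      χ (∑ i, m i * x i)
      = (-1 : ℂ) ^ (d - k) * ((Fintype.card F : ℂ) - 1) ^ (k - 1) := by
    rw [Finset.sum_filter]
    rw [← Equiv.sum_comp e (fun x : Fin d → F =>
      if ∏ i, x i = j then χ (∑ i, m i * x i) else 0)]
    rw [Fintype.sum_prod_type]
    have step1 : ∀ (a : {i : Fin d // p i} → F) (b : {i : Fin d // ¬ p i} → F),
        (if ∏ i, e (a, b) i = j then χ (∑ i, m i * e (a, b) i) else 0)
        = (if (∏ i, a i) * (∏ i, b i) = j
            then χ (∑ i : {i : Fin d // ¬ p i}, m i * b i) else 0) := by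
      intro a b
      rw [hprod, hsum]
    simp only [step1]
    have hinner : ∀ b : {i : Fin d // ¬ p i} → F,
        ∑ a : {i : Fin d // p i} → F,
          (if (∏ i, a i) * (∏ i, b i) = j
            then χ (∑ i : {i : Fin d // ¬ p i}, m i * b i) else 0)
        = (if ∏ i, b i ≠ 0
            then ((Fintype.card F - 1) ^ (k - 1) : ℕ) *
              χ (∑ i : {i : Fin d // ¬ p i}, m i * b i) else 0) := by
      intro b
      rw [← Finset.sum_filter, Finset.sum_const, nsmul_eq_mul]
      by_cases hb : ∏ i, b i = 0
      · rw [if_neg (by simpa using hb)]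
        have : Finset.univ.filter
            (fun a : {i : Fin d // p i} → F => (∏ i, a i) * (∏ i, b i) = j)
            = ∅ := by
          apply Finset.filter_false_of_mem
          intro a _
          rw [hb, mul_zero]
          exact fun h => hj h.symm
        rw [this]
        simp
      · rw [if_pos hb]
        congr 2
        have hcond : ∀ a : {i : Fin d // p i} → F,
            ((∏ i, a i) * (∏ i, b i) = j) ↔ (∏ i, a i = j * (∏ i, b i)⁻¹) := by
          intro a
          rw [eq_comm, ← div_eq_iff hb, div_eq_mul_inv, eq_comm]
        rw [Finset.filter_congr (fun a _ => by
          simpa using hcond a)]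
        rw [card_level (by omega) (j * (∏ i, b i)⁻¹)
          (mul_ne_zero hj (inv_ne_zero hb)), hcardZ]
    rw [Finset.sum_comm]
    simp only [hinner]
    rw [← Finset.sum_filter]
    have hfilt : Finset.univ.filter
        (fun b : {i : Fin d // ¬ p i} → F => ∏ i, b i ≠ 0)
        = Fintype.piFinset (fun _ : {i : Fin d // ¬ p i} => ({0}ᶜ : Finset F)) := by
      ext b
      simp [Finset.prod_ne_zero_iff]
    rw [hfilt, ← Finset.mul_sum]
    have hb2 : ∑ b ∈ Fintype.piFinset (fun _ : {i : Fin d // ¬ p i} => ({0}ᶜ : Finset F)),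
        χ (∑ i : {i : Fin d // ¬ p i}, m i * b i) = (-1 : ℂ) ^ (d - k) := by
      rw [sum_char_pi χ hχ (fun i : {i : Fin d // ¬ p i} => m i) (fun i => i.2), hcardN]
    rw [hb2]
    have hcast : (((Fintype.card F - 1) ^ (k - 1) : ℕ) : ℂ)
        = ((Fintype.card F : ℂ) - 1) ^ (k - 1) := by
      push_cast [Nat.cast_sub (by omega : 1 ≤ Fintype.card F)]
      ring
    rw [hcast]
    ring
  refine ⟨key, ?_⟩
  rw [key]
  have hsplit : d - 1 = (d - k) + (k - 1) := by omega
  rw [hsplit, pow_add, mul_inv]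
  field_simp
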